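/- If A is an n×n complex matrix with n ≥ 1 such that ‖A h‖ ≥ m‖h‖ for all h ∈ ℂⁿ (with m > 0), then the operator norm of the adjugate matrix satisfies ‖adj A‖ ≥ m^{n-1}. -/

import Mathlib

open Matrix Finset


/-- If `A` is an `n × n` complex matrix, `n ≥ 1`, with `‖A h‖ ≥ m * ‖h‖` for all
`h ∈ ℂⁿ` (with `m > 0`), then the operator norm of the adjugate satisfies
`‖adj A‖ ≥ m ^ (n - 1)`. -/
theorem stmt_1 (n : ℕ) (hn : 1 ≤ n) (A : Matrix (Fin n) (Fin n) ℂ) (m : ℝ) (hm : 0 < m)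
    (hA : ∀ h : EuclideanSpace ℂ (Fin n), m * ‖h‖ ≤ ‖Matrix.toEuclideanLin A h‖) :
    m ^ (n - 1) ≤ ‖LinearMap.toContinuousLinearMap (Matrix.toEuclideanLin A.adjugate)‖ := by
  set B := Aᴴ * A with hBdef
  have hB : B.IsHermitian := by simpa using Matrix.isHermitian_mul_conjTranspose_self Aᴴ
  set μ := hB.eigenvalues with hμdef
  -- composition lemma
  have hcomp : ∀ (M N : Matrix (Fin n) (Fin n) ℂ) (v : EuclideanSpace ℂ (Fin n)),
      Matrix.toEuclideanLin M (Matrix.toEuclideanLin N v)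
        = Matrix.toEuclideanLin (M * N) v := by
    intro M N v
    simp [Matrix.toEuclideanLin_apply, Matrix.mulVec_mulVec]
  -- eigenvector computations
  have hBv : ∀ i, Matrix.toEuclideanLin B (hB.eigenvectorBasis i)
      = (μ i : ℂ) • (hB.eigenvectorBasis i) := by
    intro i
    have h := hB.mulVec_eigenvectorBasis i
    ext j
    have := congrFun h j
    simpa [Matrix.toEuclideanLin_apply] using this
  have hvnorm : ∀ i, ‖(hB.eigenvectorBasis i : EuclideanSpace ℂ (Fin n))‖ = 1 :=
    fun i => hB.eigenvectorBasis.orthonormal.1 i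
  have hAvsq : ∀ i, ‖Matrix.toEuclideanLin A (hB.eigenvectorBasis i)‖ ^ 2 = μ i := by
    intro i
    set v : EuclideanSpace ℂ (Fin n) := hB.eigenvectorBasis i with hv
    have h1 : (inner ℂ (Matrix.toEuclideanLin A v) (Matrix.toEuclideanLin A v) : ℂ)
        = inner ℂ v (Matrix.toEuclideanLin B v) := by
      rw [← hcomp Aᴴ A v, Matrix.toEuclideanLin_conjTranspose_eq_adjoint,
        LinearMap.adjoint_inner_right]
    have h2 : (inner ℂ v (Matrix.toEuclideanLin B v) : ℂ) = (μ i : ℂ) := by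
      rw [hBv i, inner_smul_right, inner_self_eq_norm_sq_to_K, hvnorm i]
      norm_num
    have h3 := congrArg Complex.re (h1.trans h2)
    have h4 : RCLike.re (inner ℂ (Matrix.toEuclideanLin A v) (Matrix.toEuclideanLin A v) : ℂ)
        = ‖Matrix.toEuclideanLin A v‖ ^ 2 := inner_self_eq_norm_sq _
    simpa [RCLike.re_to_complex] using h4.symm.trans (by simpa using h3)
  have hμm : ∀ i, m ^ 2 ≤ μ i := by
    intro i
    rw [← hAvsq i]
    have := hA (hB.eigenvectorBasis i)
    rw [hvnorm i, mul_one] at this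
    exact pow_le_pow_left₀ hm.le this 2
  -- determinant
  have hdet : ‖A.det‖ ^ 2 = ∏ i, μ i := by
    have h1 : B.det = ∏ i, (μ i : ℂ) := hB.det_eq_prod_eigenvalues
    have h2 : B.det = ((‖A.det‖ ^ 2 : ℝ) : ℂ) := by
      rw [hBdef, Matrix.det_mul, Matrix.det_conjTranspose, Complex.star_def,
        ← Complex.normSq_eq_conj_mul_self, Complex.normSq_eq_norm_sq]
    have := h2.symm.trans h1
    push_cast at this
    exact_mod_cast this
  set i₀ : Fin n := ⟨0, hn⟩ with hi₀
  set v : EuclideanSpace ℂ (Fin n) := hB.eigenvectorBasis i₀ with hv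
  set w : EuclideanSpace ℂ (Fin n) := Matrix.toEuclideanLin A v with hw
  have hwsq : ‖w‖ ^ 2 = μ i₀ := hAvsq i₀
  have hwpos : 0 < ‖w‖ := by
    have : m * 1 ≤ ‖w‖ := by have h := hA v; rw [← hw, hv, hvnorm i₀] at h; exact h
    linarith
  -- product bound
  have hprod : (m ^ (n - 1)) ^ 2 * ‖w‖ ^ 2 ≤ ‖A.det‖ ^ 2 := by
    rw [hdet, ← Finset.mul_prod_erase univ μ (mem_univ i₀), hwsq]
    have h1 : ∏ i ∈ univ.erase i₀, (m ^ 2) ≤ ∏ i ∈ univ.erase i₀, μ i :=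
      Finset.prod_le_prod (fun i _ => sq_nonneg m) (fun i _ => hμm i)
    have hcard : (univ.erase i₀).card = n - 1 := by
      rw [Finset.card_erase_of_mem (mem_univ i₀), Finset.card_univ, Fintype.card_fin]
    rw [Finset.prod_const, hcard] at h1
    have h0 : 0 ≤ μ i₀ := le_trans (sq_nonneg m) (hμm i₀)
    calc (m ^ (n-1)) ^ 2 * μ i₀ = μ i₀ * (m ^ 2) ^ (n-1) := by ring
      _ ≤ μ i₀ * ∏ i ∈ univ.erase i₀, μ i := by
          exact mul_le_mul_of_nonneg_left h1 h0
  have hdetge : m ^ (n - 1) * ‖w‖ ≤ ‖A.det‖ := by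
    have h1 : (m ^ (n-1) * ‖w‖) ^ 2 ≤ ‖A.det‖ ^ 2 := by
      rw [mul_pow]; exact hprod
    have h2 : 0 ≤ m ^ (n-1) * ‖w‖ := by positivity
    nlinarith [norm_nonneg A.det]
  -- apply adjugate
  have hTw : Matrix.toEuclideanLin A.adjugate w = A.det • v := by
    rw [hw, hcomp, Matrix.adjugate_mul]
    have : Matrix.toEuclideanLin ((A.det • 1 : Matrix (Fin n) (Fin n) ℂ)) v
        = A.det • Matrix.toEuclideanLin (1 : Matrix (Fin n) (Fin n) ℂ) v := by
      simp
    rw [this]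
    congr 1
    ext j
    simp [Matrix.toEuclideanLin_apply]
  have hTwnorm : ‖Matrix.toEuclideanLin A.adjugate w‖ = ‖A.det‖ := by
    rw [hTw, norm_smul, hvnorm i₀, mul_one]
  have hle := (LinearMap.toContinuousLinearMap (Matrix.toEuclideanLin A.adjugate)).le_opNorm w
  rw [show ((LinearMap.toContinuousLinearMap (Matrix.toEuclideanLin A.adjugate)) w
      = Matrix.toEuclideanLin A.adjugate w) from rfl, hTwnorm] at hle
  have := le_trans hdetge hle
  exact le_of_mul_le_mul_right (by linarith [this]) hwpos
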